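/- Let N be square-free. For every rational u/v in lowest terms there exists a divisor Q of N with gcd(Q, N/Q) = 1 and an Atkin–Lehner matrix ω_Q = (Qx, y; Nz, Qw) with integer entries and determinant Q such that the rational ω_Q(u/v), in lowest terms, has denominator divisible by N. Consequently the group generated by Γ₀(N) and the Atkin–Lehner involutions acts transitively on ℚ. -/

import Mathlib

open Matrix

local notation "SL2R" => Matrix.SpecialLinearGroup (Fin 2) ℝ

/-- Möbius action of `SL₂(ℝ)` on `ℝ ∪ {∞}` (with `none = ∞`). -/
noncomputable def mobROpt (g : SL2R) : Option ℝ → Option ℝ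
  | none => if g.1 1 0 = 0 then none else some (g.1 0 0 / g.1 1 0)
  | some x => if g.1 1 0 * x + g.1 1 1 = 0 then none
      else some ((g.1 0 0 * x + g.1 0 1) / (g.1 1 0 * x + g.1 1 1))

/-- The image of `Γ₀(N)` in `SL₂(ℝ)`. -/
def Gamma0R (N : ℕ) : Set SL2R :=
  {g : SL2R | (∀ i j, ∃ n : ℤ, g.1 i j = (n : ℝ)) ∧ ∃ n : ℤ, g.1 1 0 = ((N : ℤ) * n : ℤ)}

/-- Atkin–Lehner involutions for `Γ₀(N)`, normalized to determinant one. -/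
def ALset (N : ℕ) : Set SL2R :=
  {g : SL2R | ∃ Q x y z w : ℤ, 0 < Q ∧ Q ∣ (N : ℤ) ∧ IsCoprime Q ((N : ℤ) / Q) ∧
    Q ^ 2 * x * w - (N : ℤ) * y * z = Q ∧
    g.1 0 0 = (Q * x : ℤ) / Real.sqrt (Q : ℝ) ∧ g.1 0 1 = (y : ℝ) / Real.sqrt (Q : ℝ) ∧
    g.1 1 0 = ((N : ℤ) * z : ℤ) / Real.sqrt (Q : ℝ) ∧ g.1 1 1 = (Q * w : ℤ) / Real.sqrt (Q : ℝ)}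

/-! ### Auxiliary Möbius-map lemmas -/

noncomputable def mobR (a b c d : ℝ) : Option ℝ → Option ℝ
  | none => if c = 0 then none else some (a / c)
  | some t => if c * t + d = 0 then none else some ((a * t + b) / (c * t + d))

lemma mobROpt_eq (g : SL2R) :
    mobROpt g = mobR (g.1 0 0) (g.1 0 1) (g.1 1 0) (g.1 1 1) := by
  funext x; cases x <;> rfl

lemma mobR_none (a b c d : ℝ) :
    mobR a b c d none = if c = 0 then none else some (a / c) := rfl

lemma mobR_some (a b c d t : ℝ) :
    mobR a b c d (some t) = if c * t + d = 0 then none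
      else some ((a * t + b) / (c * t + d)) := rfl

lemma mobR_comp (a b c d p q r s : ℝ) (detg : a * d - b * c = 1)
    (deth : p * s - q * r = 1) (x : Option ℝ) :
    mobR (a * p + b * r) (a * q + b * s) (c * p + d * r) (c * q + d * s) x
      = mobR a b c d (mobR p q r s x) := by
  cases x with
  | none =>
    rw [mobR_none, mobR_none]
    by_cases hr0 : r = 0
    · subst hr0
      have hp0 : p ≠ 0 := by
        intro h0; rw [h0] at deth; simp at deth
      rw [if_pos rfl, mobR_none]
      by_cases hc0 : c = 0
      · simp [hc0]
      · rw [if_neg (by simpa using mul_ne_zero hc0 hp0), if_neg hc0]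
        rw [mul_zero, add_zero, mul_zero, add_zero, mul_div_mul_right _ _ hp0]
    · rw [if_neg hr0, mobR_some]
      have key : c * (p / r) + d = (c * p + d * r) / r := by field_simp
      by_cases hL : c * p + d * r = 0
      · rw [if_pos hL, if_pos (by rw [key, hL, zero_div])]
      · rw [if_neg hL, if_neg (by rw [key]; exact div_ne_zero hL hr0)]
        congr 1
        rw [key]
        field_simp
  | some t =>
    rw [mobR_some, mobR_some]
    by_cases hden : r * t + s = 0
    · rw [if_pos hden, mobR_none]
      have hpq : p * t + q ≠ 0 := by
        intro h0
        have : p * s - q * r = 0 := by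
          have hs' : s = -(r * t) := by linarith
          have hq' : q = -(p * t) := by linarith
          rw [hs', hq']; ring
        rw [this] at deth; norm_num at deth
      have hL : (c * p + d * r) * t + (c * q + d * s) = c * (p * t + q) := by
        have h1 : d * (r * t + s) = 0 := by rw [hden, mul_zero]
        nlinarith [h1]
      have hLnum : (a * p + b * r) * t + (a * q + b * s) = a * (p * t + q) := by
        have h1 : b * (r * t + s) = 0 := by rw [hden, mul_zero]
        nlinarith [h1]
      by_cases hc0 : c = 0
      · rw [if_pos (by rw [hL, hc0, zero_mul]), if_pos hc0]
      · rw [if_neg (by rw [hL]; exact mul_ne_zero hc0 hpq), if_neg hc0]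
        rw [hL, hLnum, mul_div_mul_right _ _ hpq]
    · rw [if_neg hden, mobR_some]
      have key : c * ((p * t + q) / (r * t + s)) + d
          = ((c * p + d * r) * t + (c * q + d * s)) / (r * t + s) := by
        rw [mul_div_assoc', div_add' _ _ _ hden]; ring
      have keyn : a * ((p * t + q) / (r * t + s)) + b
          = ((a * p + b * r) * t + (a * q + b * s)) / (r * t + s) := by
        rw [mul_div_assoc', div_add' _ _ _ hden]; ring
      by_cases hL : (c * p + d * r) * t + (c * q + d * s) = 0
      · rw [if_pos hL, if_pos (by rw [key, hL, zero_div])]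
      · rw [if_neg hL, if_neg (by rw [key]; exact div_ne_zero hL hden)]
        rw [key, keyn, div_div_div_cancel_right₀ hden]

lemma mobROpt_mul (g h : SL2R) (x : Option ℝ) :
    mobROpt (g * h) x = mobROpt g (mobROpt h x) := by
  have detg : g.1 0 0 * g.1 1 1 - g.1 0 1 * g.1 1 0 = 1 := by
    have := g.2; rwa [Matrix.det_fin_two] at this
  have deth : h.1 0 0 * h.1 1 1 - h.1 0 1 * h.1 1 0 = 1 := by
    have := h.2; rwa [Matrix.det_fin_two] at this
  have e : ∀ i j, (g * h).1 i j = g.1 i 0 * h.1 0 j + g.1 i 1 * h.1 1 j := by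
    intro i j
    rw [Matrix.SpecialLinearGroup.coe_mul, Matrix.mul_apply, Fin.sum_univ_two]
  rw [mobROpt_eq, mobROpt_eq, mobROpt_eq, e, e, e, e]
  exact mobR_comp _ _ _ _ _ _ _ _ detg deth x

lemma mobROpt_one (x : Option ℝ) : mobROpt 1 x = x := by
  cases x <;> simp [mobROpt, Matrix.SpecialLinearGroup.coe_one]

lemma mobROpt_inv (g : SL2R) (x y : Option ℝ) (hx : mobROpt g x = y) :
    mobROpt g⁻¹ y = x := by
  rw [← hx, ← mobROpt_mul, inv_mul_cancel, mobROpt_one]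

/-! ### Arithmetic lemmas -/

lemma key_arith (N : ℕ) (hN : 1 ≤ N) (hsq : Squarefree N) (u v : ℤ) (hv : v ≠ 0)
    (huv : IsCoprime u v) :
    ∃ Q x y z w : ℤ, 0 < Q ∧ Q ∣ (N : ℤ) ∧ IsCoprime Q ((N : ℤ) / Q) ∧
      Q ^ 2 * x * w - (N : ℤ) * y * z = Q ∧
      ((N : ℤ) * z * u + Q * w * v ≠ 0) ∧
      ((N : ℤ) ∣ ((N : ℤ) * z * u + Q * w * v)) ∧
      IsCoprime (Q * x * u + y * v) (N : ℤ) := by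
  have hN0 : (N : ℤ) ≠ 0 := by exact_mod_cast Nat.one_le_iff_ne_zero.mp hN
  set Mn : ℕ := Int.gcd (N : ℤ) v with hMn
  have hMeq : Mn = N.gcd v.natAbs := by simp [hMn, Int.gcd]
  have hMdvdN : Mn ∣ N := by
    have h := Int.gcd_dvd_left (a := (N : ℤ)) (b := v)
    exact_mod_cast h
  set Qn : ℕ := N / Mn with hQn
  have hQMn : Qn * Mn = N := Nat.div_mul_cancel hMdvdN
  have hQpos : 0 < Qn := by
    rcases Nat.eq_zero_or_pos Qn with h | h
    · exfalso; rw [h, zero_mul] at hQMn; omega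
    · exact h
  have hcopQM : Nat.Coprime Qn Mn := by
    have h := hsq; rw [← hQMn] at h; exact (Nat.squarefree_mul_iff.mp h).1
  set Q : ℤ := (Qn : ℤ) with hQdef
  set M : ℤ := (Mn : ℤ) with hMdef
  have hQM : Q * M = (N : ℤ) := by rw [hQdef, hMdef]; exact_mod_cast hQMn
  have hQ0 : 0 < Q := by rw [hQdef]; exact_mod_cast hQpos
  have hMdvdv : M ∣ v := Int.gcd_dvd_right _ _
  have hcQM : IsCoprime Q M := by rw [Nat.isCoprime_iff_coprime]; exact hcopQM
  have hNQ : (N : ℤ) / Q = M := by rw [← hQM, Int.mul_ediv_cancel_left _ (ne_of_gt hQ0)]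
  have hcQv : IsCoprime Q v := by
    rw [Int.isCoprime_iff_gcd_eq_one]
    have hg1 : Nat.gcd Qn v.natAbs ∣ Qn := Nat.gcd_dvd_left _ _
    have hg2 : Nat.gcd Qn v.natAbs ∣ Mn := by
      rw [hMeq]
      exact Nat.dvd_gcd (hg1.trans ⟨Mn, hQMn.symm⟩) (Nat.gcd_dvd_right _ _)
    have hgg : Nat.gcd Qn v.natAbs * Nat.gcd Qn v.natAbs ∣ N := by
      rw [← hQMn]; exact mul_dvd_mul hg1 hg2
    have := Nat.isUnit_iff.mp (hsq _ hgg)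
    simpa [Int.gcd, hQdef] using this
  set z : ℤ := if (N : ℤ) * u + Q * v = 0 then 1 + Q else 1 with hz
  have hcQz : IsCoprime Q z := by
    rw [hz]; split_ifs
    · exact ⟨-1, 1, by ring⟩
    · exact isCoprime_one_right
  obtain ⟨x, y₀, hxy⟩ := hcQM.mul_right hcQz
  refine ⟨Q, x, -y₀, z, 1, hQ0, ⟨M, hQM.symm⟩, by rw [hNQ]; exact hcQM, ?_, ?_, ?_, ?_⟩
  · linear_combination Q * hxy - y₀ * z * hQM
  · rw [hz]; split_ifs with h0
    · have hu : u ≠ 0 := by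
        rintro rfl
        rw [mul_zero, zero_add] at h0
        exact hv (by
          rcases mul_eq_zero.mp h0 with h | h
          · exact absurd h (ne_of_gt hQ0)
          · exact h)
      have he : (N : ℤ) * (1 + Q) * u + Q * 1 * v = (N : ℤ) * Q * u := by
        linear_combination h0
      rw [he]
      exact mul_ne_zero (mul_ne_zero hN0 (ne_of_gt hQ0)) hu
    · intro hc; exact h0 (by linear_combination hc)
  · obtain ⟨v', hv'⟩ := hMdvdv
    exact ⟨z * u + v', by rw [hv', ← hQM]; ring⟩
  · have hy0Q : IsCoprime (-y₀ : ℤ) Q :=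
      IsCoprime.neg_left ⟨M * z, x, by linear_combination hxy⟩
    have hnQ : IsCoprime (Q * x * u + -y₀ * v) Q := by
      have h1 : IsCoprime (-y₀ * v) Q := IsCoprime.mul_left hy0Q hcQv.symm
      have h2 := h1.add_mul_left_left (x * u)
      have e : Q * x * u + -y₀ * v = -y₀ * v + Q * (x * u) := by ring
      rw [e]; exact h2
    have hxM : IsCoprime x M := ⟨Q, y₀ * z, by linear_combination hxy⟩
    have huM : IsCoprime u M := huv.of_isCoprime_of_dvd_right hMdvdv
    have hnM : IsCoprime (Q * x * u + -y₀ * v) M := by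
      have h1 : IsCoprime (Q * x * u) M :=
        IsCoprime.mul_left (IsCoprime.mul_left hcQM hxM) huM
      obtain ⟨v', hv'⟩ := hMdvdv
      have h2 := h1.add_mul_left_left (-y₀ * v')
      have e : Q * x * u + -y₀ * v = Q * x * u + M * (-y₀ * v') := by rw [hv']; ring
      rw [e]; exact h2
    have h := hnQ.mul_right hnM
    rwa [hQM] at h

lemma den_dvd_of (N : ℕ) (n D : ℤ) (hD : D ≠ 0) (hND : (N : ℤ) ∣ D)
    (hn : IsCoprime n (N : ℤ)) : N ∣ ((n : ℚ) / (D : ℚ)).den := by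
  set r : ℚ := (n : ℚ) / (D : ℚ) with hr
  have hDQ : (D : ℚ) ≠ 0 := Int.cast_ne_zero.mpr hD
  have hden0 : ((r.den : ℤ)) ≠ 0 := Int.natCast_ne_zero.mpr r.den_nz
  have hcross : (r.num : ℚ) * D = n * r.den := by
    have h1 : r * D = n := div_mul_cancel₀ _ hDQ
    rw [← Rat.mul_den_eq_num r, mul_right_comm, h1]
  have hZ : r.num * D = n * (r.den : ℤ) := by exact_mod_cast hcross
  have hcopr : IsCoprime r.num (r.den : ℤ) := by
    rw [Int.isCoprime_iff_gcd_eq_one]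
    simpa [Int.gcd] using r.reduced
  have hdenD : (r.den : ℤ) ∣ D := by
    apply hcopr.symm.dvd_of_dvd_mul_left
    rw [hZ]
    exact dvd_mul_left _ _
  obtain ⟨m, hm⟩ := hdenD
  have hnm : n = r.num * m := by
    have h : n * (r.den : ℤ) = r.num * m * (r.den : ℤ) := by rw [← hZ, hm]; ring
    exact mul_right_cancel₀ hden0 h
  have hmN : IsCoprime m (N : ℤ) :=
    hn.of_isCoprime_of_dvd_left ⟨r.num, by rw [hnm]; ring⟩
  have hfin : (N : ℤ) ∣ (r.den : ℤ) := by
    apply hmN.symm.dvd_of_dvd_mul_right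
    rw [← hm]; exact hND
  exact_mod_cast hfin

/-! ### Explicit elements -/

noncomputable def gammaElt (a b c d : ℤ) (h : a * d - b * c = 1) : SL2R :=
  ⟨!![(a : ℝ), (b : ℝ); (c : ℝ), (d : ℝ)], by
    rw [Matrix.det_fin_two_of]; exact_mod_cast h⟩

lemma gammaElt_entry00 (a b c d : ℤ) (h : a * d - b * c = 1) :
    (gammaElt a b c d h).1 0 0 = a := by simp [gammaElt]
lemma gammaElt_entry01 (a b c d : ℤ) (h : a * d - b * c = 1) :
    (gammaElt a b c d h).1 0 1 = b := by simp [gammaElt]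
lemma gammaElt_entry10 (a b c d : ℤ) (h : a * d - b * c = 1) :
    (gammaElt a b c d h).1 1 0 = c := by simp [gammaElt]
lemma gammaElt_entry11 (a b c d : ℤ) (h : a * d - b * c = 1) :
    (gammaElt a b c d h).1 1 1 = d := by simp [gammaElt]

lemma gammaElt_mem (N : ℕ) (a b c d : ℤ) (h : a * d - b * c = 1) (e : ℤ)
    (hc : c = (N : ℤ) * e) : gammaElt a b c d h ∈ Gamma0R N := by
  constructor
  · intro i j
    fin_cases i <;> fin_cases j
    · exact ⟨a, gammaElt_entry00 a b c d h⟩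
    · exact ⟨b, gammaElt_entry01 a b c d h⟩
    · exact ⟨c, gammaElt_entry10 a b c d h⟩
    · exact ⟨d, gammaElt_entry11 a b c d h⟩
  · exact ⟨e, by rw [gammaElt_entry10, hc]⟩

noncomputable def alElt (N : ℕ) (Q x y z w : ℤ) (hQ : 0 < Q)
    (hdet : Q ^ 2 * x * w - (N : ℤ) * y * z = Q) : SL2R :=
  ⟨!![(Q * x : ℤ) / Real.sqrt (Q : ℝ), (y : ℝ) / Real.sqrt (Q : ℝ);
      ((N : ℤ) * z : ℤ) / Real.sqrt (Q : ℝ), (Q * w : ℤ) / Real.sqrt (Q : ℝ)], by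
    have hQR : (0 : ℝ) < (Q : ℝ) := by exact_mod_cast hQ
    have hs : Real.sqrt (Q : ℝ) ≠ 0 := by positivity
    have hss : Real.sqrt (Q : ℝ) * Real.sqrt (Q : ℝ) = (Q : ℝ) :=
      Real.mul_self_sqrt hQR.le
    rw [Matrix.det_fin_two_of]
    have hd : ((Q : ℝ)) ^ 2 * x * w - (N : ℝ) * y * z = (Q : ℝ) := by exact_mod_cast hdet
    field_simp
    push_cast; linear_combination hd - hss⟩

lemma alElt_entry00 (N : ℕ) (Q x y z w : ℤ) (hQ : 0 < Q)
    (hdet : Q ^ 2 * x * w - (N : ℤ) * y * z = Q) :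
    (alElt N Q x y z w hQ hdet).1 0 0 = (Q * x : ℤ) / Real.sqrt (Q : ℝ) := by simp [alElt]
lemma alElt_entry01 (N : ℕ) (Q x y z w : ℤ) (hQ : 0 < Q)
    (hdet : Q ^ 2 * x * w - (N : ℤ) * y * z = Q) :
    (alElt N Q x y z w hQ hdet).1 0 1 = (y : ℝ) / Real.sqrt (Q : ℝ) := by simp [alElt]
lemma alElt_entry10 (N : ℕ) (Q x y z w : ℤ) (hQ : 0 < Q)
    (hdet : Q ^ 2 * x * w - (N : ℤ) * y * z = Q) :
    (alElt N Q x y z w hQ hdet).1 1 0 = ((N : ℤ) * z : ℤ) / Real.sqrt (Q : ℝ) := by simp [alElt]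
lemma alElt_entry11 (N : ℕ) (Q x y z w : ℤ) (hQ : 0 < Q)
    (hdet : Q ^ 2 * x * w - (N : ℤ) * y * z = Q) :
    (alElt N Q x y z w hQ hdet).1 1 1 = (Q * w : ℤ) / Real.sqrt (Q : ℝ) := by simp [alElt]

lemma alElt_mem (N : ℕ) (Q x y z w : ℤ) (hQ : 0 < Q) (hQN : Q ∣ (N : ℤ))
    (hcop : IsCoprime Q ((N : ℤ) / Q))
    (hdet : Q ^ 2 * x * w - (N : ℤ) * y * z = Q) :
    alElt N Q x y z w hQ hdet ∈ ALset N :=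
  ⟨Q, x, y, z, w, hQ, hQN, hcop, hdet, alElt_entry00 .., alElt_entry01 ..,
    alElt_entry10 .., alElt_entry11 ..⟩

/-! ### Sending a rational to infinity -/

lemma to_infty (N : ℕ) (hN : 1 ≤ N) (hsq : Squarefree N) (q : ℚ) :
    ∃ g ∈ Subgroup.closure (Gamma0R N ∪ ALset N),
      mobROpt g (some (q : ℝ)) = none := by
  have hN0 : (N : ℤ) ≠ 0 := by exact_mod_cast Nat.one_le_iff_ne_zero.mp hN
  set u : ℤ := q.num with hu
  set v : ℤ := (q.den : ℤ) with hvdef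
  have hv : v ≠ 0 := Int.natCast_ne_zero.mpr q.den_nz
  have hvR : (v : ℝ) ≠ 0 := Int.cast_ne_zero.mpr hv
  have huv : IsCoprime u v := by
    rw [Int.isCoprime_iff_gcd_eq_one]
    simpa [Int.gcd, hu, hvdef, Nat.Coprime] using q.reduced
  obtain ⟨Q, x, y, z, w, hQ0, hQN, hcop, hdet, hD0, hND, hncop⟩ :=
    key_arith N hN hsq u v hv huv
  set n : ℤ := Q * x * u + y * v with hn
  set D : ℤ := (N : ℤ) * z * u + Q * w * v with hD
  have hDR : (D : ℝ) ≠ 0 := Int.cast_ne_zero.mpr hD0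
  have hQR : (0 : ℝ) < (Q : ℝ) := by exact_mod_cast hQ0
  have hs : Real.sqrt (Q : ℝ) ≠ 0 := by positivity
  -- the Atkin-Lehner element
  set ω : SL2R := alElt N Q x y z w hQ0 hdet with hω
  have hωmem : ω ∈ ALset N := alElt_mem N Q x y z w hQ0 hQN hcop hdet
  have hqR : (q : ℝ) = (u : ℝ) / (v : ℝ) := by
    rw [hu, hvdef, Rat.cast_def]; push_cast; rfl
  have stepA : mobROpt ω (some (q : ℝ)) = some ((n : ℝ) / (D : ℝ)) := by
    rw [mobROpt_eq, hω, alElt_entry00, alElt_entry01, alElt_entry10, alElt_entry11,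
      mobR_some, hqR]
    have e1 : ((((N : ℤ) * z : ℤ) : ℝ) / Real.sqrt (Q : ℝ)) * ((u : ℝ) / (v : ℝ))
        + (((Q * w : ℤ) : ℝ) / Real.sqrt (Q : ℝ))
        = (D : ℝ) / (Real.sqrt (Q : ℝ) * (v : ℝ)) := by
      rw [hD]; push_cast; field_simp
    have e2 : ((((Q * x : ℤ)) : ℝ) / Real.sqrt (Q : ℝ)) * ((u : ℝ) / (v : ℝ))
        + ((y : ℝ) / Real.sqrt (Q : ℝ))
        = (n : ℝ) / (Real.sqrt (Q : ℝ) * (v : ℝ)) := by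
      rw [hn]; push_cast; field_simp
    rw [e1, e2, if_neg (div_ne_zero hDR (mul_ne_zero hs hvR)),
      div_div_div_cancel_right₀ (mul_ne_zero hs hvR)]
  -- the Γ₀(N) element sending n/D to ∞
  set g0 : ℤ := (Int.gcd n D : ℤ) with hg0
  have hg0pos : (0 : ℤ) < g0 := by
    rw [hg0]
    exact_mod_cast Int.gcd_pos_of_ne_zero_right n hD0
  have hg0nz : g0 ≠ 0 := ne_of_gt hg0pos
  set n₁ : ℤ := n / g0 with hn1
  set d₁ : ℤ := D / g0 with hd1
  have hng : g0 * n₁ = n := Int.mul_ediv_cancel' (Int.gcd_dvd_left _ _)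
  have hdg : g0 * d₁ = D := Int.mul_ediv_cancel' (Int.gcd_dvd_right _ _)
  have hcop1 : IsCoprime n₁ d₁ := by
    rw [Int.isCoprime_iff_gcd_eq_one]
    exact Int.gcd_div_gcd_div_gcd (Int.gcd_pos_of_ne_zero_right n hD0)
  have hg0N : IsCoprime g0 (N : ℤ) :=
    hncop.of_isCoprime_of_dvd_left (Int.gcd_dvd_left _ _)
  have hNd1 : (N : ℤ) ∣ d₁ := by
    apply hg0N.symm.dvd_of_dvd_mul_left
    rw [hdg]; exact hND
  obtain ⟨a, b, hab⟩ := hcop1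
  have hdet2 : a * n₁ - b * (-d₁) = 1 := by linear_combination hab
  obtain ⟨e, he⟩ := hNd1
  set γ : SL2R := gammaElt a b (-d₁) n₁ hdet2 with hγ
  have hγmem : γ ∈ Gamma0R N := gammaElt_mem N a b (-d₁) n₁ hdet2 (-e) (by rw [he]; ring)
  have stepB : mobROpt γ (some ((n : ℝ) / (D : ℝ))) = none := by
    rw [mobROpt_eq, hγ, gammaElt_entry00, gammaElt_entry01, gammaElt_entry10,
      gammaElt_entry11, mobR_some, if_pos]
    have hid : d₁ * n = n₁ * D := by
      rw [← hng, ← hdg]; ring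
    have hidR : (d₁ : ℝ) * (n : ℝ) = (n₁ : ℝ) * (D : ℝ) := by exact_mod_cast hid
    push_cast
    field_simp
    linarith [hidR]
  refine ⟨γ * ω, Subgroup.mul_mem _
    (Subgroup.subset_closure (Or.inl hγmem))
    (Subgroup.subset_closure (Or.inr hωmem)), ?_⟩
  rw [mobROpt_mul, stepA, stepB]

theorem stmt15 (N : ℕ) (hN : 1 ≤ N) (hsq : Squarefree N) :
    (∀ u v : ℤ, v ≠ 0 → IsCoprime u v →
      ∃ Q x y z w : ℤ, 0 < Q ∧ Q ∣ (N : ℤ) ∧ IsCoprime Q ((N : ℤ) / Q) ∧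
        Q ^ 2 * x * w - (N : ℤ) * y * z = Q ∧
        (N : ℤ) * z * u + Q * w * v ≠ 0 ∧
        N ∣ (((Q * x * u + y * v : ℤ) : ℚ) / (((N : ℤ) * z * u + Q * w * v : ℤ) : ℚ)).den) ∧
    (∀ q₁ q₂ : ℚ, ∃ g ∈ Subgroup.closure (Gamma0R N ∪ ALset N),
      mobROpt g (some (q₁ : ℝ)) = some ((q₂ : ℝ))) := by
  constructor
  · intro u v hv huv
    obtain ⟨Q, x, y, z, w, hQ0, hQN, hcop, hdet, hD0, hND, hncop⟩ :=
      key_arith N hN hsq u v hv huv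
    exact ⟨Q, x, y, z, w, hQ0, hQN, hcop, hdet, hD0,
      den_dvd_of N _ _ hD0 hND hncop⟩
  · intro q₁ q₂
    obtain ⟨g₁, hg₁, hg₁x⟩ := to_infty N hN hsq q₁
    obtain ⟨g₂, hg₂, hg₂x⟩ := to_infty N hN hsq q₂
    refine ⟨g₂⁻¹ * g₁, Subgroup.mul_mem _ (Subgroup.inv_mem _ hg₂) hg₁, ?_⟩
    rw [mobROpt_mul, hg₁x, mobROpt_inv g₂ _ _ hg₂x]
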